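/- Let X, Y : ℝ → (2×2 real matrices) be continuously differentiable on [0,∞), with Y_t symmetric and X_t invertible for every t ≥ 0. Define ε_t = (1/2)·(d/dt det X_t)/det X_t, δ_t = (det X_t)²·det((d/dt)(X_t⁻¹·Y_t·X_t⁻ᵀ)), and κ_t = (d/dt) tr Y_t − 2·tr((dX_t/dt)·X_t⁻¹·Y_t). If δ_t ≥ ε_t² and κ_t ≥ 0 for all t ≥ 0, then the process is CP-divisible: for all t ≥ 0 and τ > 0, setting X_τ(t) = X_{t+τ}·X_t⁻¹ and Y_τ(t) = Y_{t+τ} − X_τ(t)·Y_t·X_τ(t)ᵀ, the matrix (i/2)·X_τ(t)·Ω₁·X_τ(t)ᵀ + Y_τ(t) − (i/2)Ω₁ is PSD. -/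

import Mathlib

open Matrix ComplexOrder

/-- The one-mode symplectic form `Ω₁ = [[0,1],[-1,0]]`. -/
def Omega1 : Matrix (Fin 2) (Fin 2) ℝ := !![0, 1; -1, 0]

/-- Entrywise coercion of a real matrix to a complex matrix. -/
def cC {m : Type*} (M : Matrix m m ℝ) : Matrix m m ℂ := M.map (fun x => (x : ℂ))

/-! ### Auxiliary real 2×2 positive-semidefiniteness toolkit -/

abbrev M2 := Matrix (Fin 2) (Fin 2) ℝ

def psd2 (A : M2) : Prop := ∀ u : Fin 2 → ℝ, 0 ≤ u ⬝ᵥ (A *ᵥ u)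

lemma dot_expand (A : M2) (u : Fin 2 → ℝ) :
    u ⬝ᵥ (A *ᵥ u) = A 0 0 * u 0 * u 0 + A 0 1 * u 0 * u 1 + A 1 0 * u 1 * u 0
      + A 1 1 * u 1 * u 1 := by
  simp [dotProduct, Matrix.mulVec, Fin.sum_univ_two]
  ring

lemma quad_psd (a b c u v : ℝ) (htr : 0 ≤ a + c) (hdet : 0 ≤ a*c - b^2) :
    0 ≤ a*u*u + b*u*v + b*v*u + c*v*v := by
  have ha : 0 ≤ a := by nlinarith [sq_nonneg b]
  have hc : 0 ≤ c := by nlinarith [sq_nonneg b]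
  rcases eq_or_lt_of_le ha with h|h
  · have hb : b = 0 := by nlinarith [sq_nonneg b]
    rw [hb, ← h]
    nlinarith [sq_nonneg v]
  · nlinarith [sq_nonneg (a*u + b*v), mul_nonneg hdet (sq_nonneg v)]

lemma psd2_of_trace_det (A : M2) (hs : A 0 1 = A 1 0)
    (htr : 0 ≤ A.trace) (hdet : 0 ≤ A.det) : psd2 A := by
  rw [Matrix.trace_fin_two] at htr
  rw [Matrix.det_fin_two, ← hs] at hdet
  intro u
  rw [dot_expand, ← hs]
  exact quad_psd _ _ _ _ _ htr (by nlinarith)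

lemma psd2_congr (A M : M2) (h : psd2 A) : psd2 (M * A * Mᵀ) := by
  intro u
  have e : u ⬝ᵥ ((M * A * Mᵀ) *ᵥ u) = (Mᵀ *ᵥ u) ⬝ᵥ (A *ᵥ (Mᵀ *ᵥ u)) := by
    rw [dot_expand, dot_expand]
    simp [Matrix.mul_apply, Matrix.mulVec, dotProduct, Fin.sum_univ_two]
    ring
  rw [e]; exact h _

lemma psd2_trace_nonneg (A : M2) (h : psd2 A) : 0 ≤ A.trace := by
  have h0 := h ![1, 0]
  have h1 := h ![0, 1]
  rw [dot_expand] at h0 h1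
  rw [Matrix.trace_fin_two]
  simp at h0 h1
  linarith

lemma psd2_entries (A : M2) (hs : A 0 1 = A 1 0) (h : psd2 A) :
    0 ≤ A 0 0 ∧ 0 ≤ A 1 1 ∧ (A 0 1)^2 ≤ A 0 0 * A 1 1 := by
  have h0 := h ![1, 0]; have h1 := h ![0, 1]
  have h2 := h ![A 0 1, -(A 0 0)]
  have h3 := h ![A 1 1, -(A 0 1)]
  have h6 := h ![-(A 1 1 + 1), A 0 1]
  rw [dot_expand, ← hs] at h0 h1 h2 h3 h6
  simp at h0 h1 h2 h3 h6
  refine ⟨h0, h1, ?_⟩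
  rcases eq_or_lt_of_le h0 with ha|ha
  · nlinarith
  · nlinarith

lemma psd2_det_nonneg (A : M2) (hs : A 0 1 = A 1 0) (h : psd2 A) : 0 ≤ A.det := by
  obtain ⟨h0, h1, hd⟩ := psd2_entries A hs h
  rw [Matrix.det_fin_two, ← hs]
  nlinarith

lemma det_eq_zero_of_null (A : M2) (hs : A 0 1 = A 1 0)
    (h : psd2 A) (u : Fin 2 → ℝ) (hu : ¬ (u 0 = 0 ∧ u 1 = 0))
    (hq : u ⬝ᵥ (A *ᵥ u) = 0) : A.det ≤ 0 := by
  by_contra hd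
  push_neg at hd
  rw [Matrix.det_fin_two, ← hs] at hd
  obtain ⟨h0, h1, hdd⟩ := psd2_entries A hs h
  have ha : 0 < A 0 0 := by nlinarith
  rw [dot_expand, ← hs] at hq
  have key : (A 0 0 * u 0 + A 0 1 * u 1)^2 + (A 0 0 * A 1 1 - A 0 1 * A 0 1) * (u 1 * u 1) = 0 := by
    linear_combination A 0 0 * hq
  have h1' : u 1 = 0 := by
    by_contra hne
    nlinarith [sq_nonneg (A 0 0 * u 0 + A 0 1 * u 1), mul_pos hd (mul_self_pos.2 hne)]
  have h0' : u 0 = 0 := by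
    by_contra hne
    rw [h1'] at key
    nlinarith [mul_pos ha (mul_self_pos.2 hne), sq_nonneg (A 0 0 * u 0)]
  exact hu ⟨h0', h1'⟩

lemma key_tr (u v w x y z : ℝ) (hu : 0 ≤ u) (hv : 0 ≤ v) (hx : 0 ≤ x) (hy : 0 ≤ y)
    (ha : w^2 ≤ u*v) (hb : z^2 ≤ x*y) : 0 ≤ u*x + 2*w*z + v*y := by
  nlinarith [sq_nonneg (u*x - v*y), mul_nonneg (mul_nonneg hu hx) (mul_nonneg hv hy),
    sq_nonneg (w*z), mul_nonneg hu hx, mul_nonneg hv hy, mul_nonneg hu hv, mul_nonneg hx hy]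

lemma key_sq (u v w x y z : ℝ) (hu : 0 ≤ u) (hv : 0 ≤ v) (hx : 0 ≤ x) (hy : 0 ≤ y)
    (ha : w^2 ≤ u*v) (hb : z^2 ≤ x*y) :
    4*(u*v - w^2)*(x*y - z^2) ≤ (u*x + 2*w*z + v*y)^2 := by
  rcases le_or_gt 0 (w*z) with hwz|hwz
  · nlinarith [sq_nonneg (u*x - v*y),
      mul_nonneg hwz (add_nonneg (mul_nonneg hu hx) (mul_nonneg hv hy)),
      mul_nonneg (mul_nonneg hu hv) (sq_nonneg z), mul_nonneg (sq_nonneg w) (mul_nonneg hx hy),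
      mul_nonneg (mul_nonneg hu hx) (mul_nonneg hv hy), sq_nonneg (w*z)]
  · set s := Real.sqrt ((u*x)*(v*y)) with hsdef
    have hs0 : 0 ≤ s := Real.sqrt_nonneg _
    have hs2 : s^2 = (u*x)*(v*y) :=
      Real.sq_sqrt (mul_nonneg (mul_nonneg hu hx) (mul_nonneg hv hy))
    have hcs : (w*z)^2 ≤ s^2 := by
      rw [hs2]; nlinarith [mul_nonneg hx hy, sq_nonneg w, sq_nonneg z]
    have hc : -(w*z) ≤ s := by nlinarith
    have hT : 2*s ≤ u*x + v*y := by
      nlinarith [sq_nonneg (u*x - v*y), mul_nonneg (mul_nonneg hu hx) (mul_nonneg hv hy),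
        add_nonneg (mul_nonneg hu hx) (mul_nonneg hv hy)]
    have hPQ : 2*(-(w*z))*s ≤ u*v*z^2 + w^2*x*y := by
      nlinarith [sq_nonneg (u*v*z^2 - w^2*x*y),
        mul_nonneg (mul_nonneg (mul_nonneg hu hv) (sq_nonneg z))
          (mul_nonneg (sq_nonneg w) (mul_nonneg hx hy)),
        add_nonneg (mul_nonneg (mul_nonneg hu hv) (sq_nonneg z))
          (mul_nonneg (sq_nonneg w) (mul_nonneg hx hy)),
        mul_nonneg (mul_nonneg (neg_nonneg.2 hwz.le) hs0) hs0, hs2]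
    have hprod : 0 ≤ (u*x + v*y - 2*s) * ((u*x + v*y) + 2*s + 4*(w*z)) := by
      apply mul_nonneg (by linarith)
      nlinarith
    nlinarith [hprod, hPQ, hs2]

lemma trace_mul_ge (P Q : M2) (hPs : P 0 1 = P 1 0)
    (hQs : Q 0 1 = Q 1 0) (hP : psd2 P) (hQ : psd2 Q) :
    2 * Real.sqrt (P.det * Q.det) ≤ (P * Q).trace := by
  obtain ⟨p0, p1, pd⟩ := psd2_entries P hPs hP
  obtain ⟨q0, q1, qd⟩ := psd2_entries Q hQs hQ
  have htre : (P * Q).trace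
      = P 0 0 * Q 0 0 + 2 * (P 0 1 * Q 0 1) + P 1 1 * Q 1 1 := by
    rw [Matrix.trace_fin_two, Matrix.mul_apply, Matrix.mul_apply, Fin.sum_univ_two,
      Fin.sum_univ_two, ← hPs, ← hQs]
    ring
  have hdPe : P.det = P 0 0 * P 1 1 - (P 0 1)^2 := by
    rw [Matrix.det_fin_two, ← hPs]; ring
  have hdQe : Q.det = Q 0 0 * Q 1 1 - (Q 0 1)^2 := by
    rw [Matrix.det_fin_two, ← hQs]; ring
  have htr0 : 0 ≤ (P * Q).trace := by
    rw [htre]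
    have := key_tr (P 0 0) (P 1 1) (P 0 1) (Q 0 0) (Q 1 1) (Q 0 1) p0 p1 q0 q1 pd qd
    linarith
  have hkey : 4 * (P.det * Q.det) ≤ ((P * Q).trace)^2 := by
    rw [htre, hdPe, hdQe]
    have := key_sq (P 0 0) (P 1 1) (P 0 1) (Q 0 0) (Q 1 1) (Q 0 1) p0 p1 q0 q1 pd qd
    nlinarith [this]
  have hle : Real.sqrt (P.det * Q.det) ≤ (P * Q).trace / 2 := by
    rw [show (P*Q).trace / 2 = Real.sqrt (((P*Q).trace / 2)^2) by
      rw [Real.sqrt_sq (by linarith)]]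
    apply Real.sqrt_le_sqrt
    nlinarith
  linarith

lemma psd2_of_conj (A M : M2) (hs : A 0 1 = A 1 0) (hdet : 0 ≤ A.det)
    (htr : 0 ≤ (M * A * Mᵀ).trace) (hu : IsUnit M.det) : psd2 A := by
  rcases le_or_gt 0 A.trace with h|h
  · exact psd2_of_trace_det A hs h hdet
  · exfalso
    have hnegs : (-A) 0 1 = (-A) 1 0 := by simp [hs]
    have hnegdet : 0 ≤ (-A).det := by
      rw [Matrix.det_fin_two] at hdet ⊢
      simp only [Matrix.neg_apply]
      nlinarith
    have hnegtr : 0 ≤ (-A).trace := by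
      rw [Matrix.trace_neg]; linarith
    have hpsdneg := psd2_of_trace_det (-A) hnegs hnegtr hnegdet
    have hS : psd2 (M * (-A) * Mᵀ) := psd2_congr _ _ hpsdneg
    have htr0 : (M * (-A) * Mᵀ).trace = - (M * A * Mᵀ).trace := by
      simp [Matrix.mul_neg, Matrix.neg_mul]
    have htrS0 : (M * (-A) * Mᵀ).trace = 0 := by
      have h2 := psd2_trace_nonneg _ hS
      rw [htr0] at h2 ⊢
      linarith
    set S := M * (-A) * Mᵀ with hSdef
    have hSsym : S 0 1 = S 1 0 := by
      have : Sᵀ = S := by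
        rw [hSdef, Matrix.transpose_mul, Matrix.transpose_mul, Matrix.transpose_transpose]
        have hAT : (-A)ᵀ = -A := by
          ext i j
          fin_cases i <;> fin_cases j <;> simp [hs]
        rw [Matrix.transpose_neg] at hAT ⊢
        rw [show Aᵀ = A by
          ext i j; fin_cases i <;> fin_cases j <;> simp [hs]]
        rw [Matrix.mul_assoc]
      calc S 0 1 = Sᵀ 1 0 := rfl
        _ = S 1 0 := by rw [this]
    obtain ⟨hS0, hS1, hSd⟩ := psd2_entries S hSsym hS
    rw [Matrix.trace_fin_two] at htrS0
    have hS00 : S 0 0 = 0 := by linarith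
    have hS11 : S 1 1 = 0 := by linarith
    have hS01 : S 0 1 = 0 := by nlinarith
    have hSzero : S = 0 := by
      ext i j
      fin_cases i <;> fin_cases j <;>
        simp [hS00, hS11, hS01, hSsym ▸ hS01]
    have hMA : -A = M⁻¹ * S * (Mᵀ)⁻¹ := by
      rw [hSdef]
      rw [show M⁻¹ * (M * -A * Mᵀ) * (Mᵀ)⁻¹ = (M⁻¹ * M) * -A * (Mᵀ * (Mᵀ)⁻¹) by
        simp only [Matrix.mul_assoc]]
      rw [Matrix.nonsing_inv_mul _ hu, Matrix.mul_nonsing_inv _ (by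
        rwa [Matrix.det_transpose])]
      simp
    rw [hSzero] at hMA
    simp at hMA
    have : A.trace = 0 := by
      rw [show A = 0 by simpa using congrArg Neg.neg hMA]
      simp
    linarith

/-! ### Monotonicity via derivatives -/

lemma mono_Icc {f f' : ℝ → ℝ} {a b : ℝ} (hab : a ≤ b)
    (hf : ∀ x ∈ Set.Icc a b, HasDerivWithinAt f (f' x) (Set.Icc a b) x)
    (h0 : ∀ x ∈ Set.Ioo a b, 0 ≤ f' x) : f a ≤ f b := by
  have hmono : MonotoneOn f (Set.Icc a b) := by
    apply monotoneOn_of_deriv_nonneg (convex_Icc a b)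
      (fun x hx => (hf x hx).continuousWithinAt)
    · intro x hx
      rw [interior_Icc] at hx
      exact (((hf x (Set.Ioo_subset_Icc_self hx)).hasDerivAt
        (Icc_mem_nhds hx.1 hx.2)).differentiableAt).differentiableWithinAt
    · intro x hx
      rw [interior_Icc] at hx
      rw [((hf x (Set.Ioo_subset_Icc_self hx)).hasDerivAt
        (Icc_mem_nhds hx.1 hx.2)).deriv]
      exact h0 x hx
  exact hmono (Set.left_mem_Icc.2 hab) (Set.right_mem_Icc.2 hab) hab

/-! ### Derivative formulas -/

noncomputable def Ainv' (X X' : ℝ → M2) (t : ℝ) : M2 := -((X t)⁻¹ * X' t * (X t)⁻¹)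

noncomputable def Wm (X X' Y Y' : ℝ → M2) (t : ℝ) : M2 :=
  Ainv' X X' t * Y t * ((X t)⁻¹)ᵀ + (X t)⁻¹ * Y' t * ((X t)⁻¹)ᵀ
    + (X t)⁻¹ * Y t * (Ainv' X X' t)ᵀ

section Derivs

variable {X Y X' Y' : ℝ → M2}

lemma hasDeriv_det
    (hX : ∀ i j, ∀ t, 0 ≤ t → HasDerivWithinAt (fun s => X s i j) (X' t i j) (Set.Ici 0) t)
    {t : ℝ} (ht : 0 ≤ t) :
    HasDerivWithinAt (fun s => (X s).det)
      (X' t 0 0 * X t 1 1 + X t 0 0 * X' t 1 1 - (X' t 0 1 * X t 1 0 + X t 0 1 * X' t 1 0))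
      (Set.Ici 0) t := by
  simp only [Matrix.det_fin_two]
  exact ((hX 0 0 t ht).mul (hX 1 1 t ht)).sub ((hX 0 1 t ht).mul (hX 1 0 t ht))

lemma inv_entry_eq (s : ℝ) :
    (X s)⁻¹ = ((X s).det)⁻¹ • !![X s 1 1, -(X s 0 1); -(X s 1 0), X s 0 0] := by
  rw [Matrix.inv_def, adjugate_fin_two, Ring.inverse_eq_inv]

lemma hasDeriv_inv
    (hX : ∀ i j, ∀ t, 0 ≤ t → HasDerivWithinAt (fun s => X s i j) (X' t i j) (Set.Ici 0) t)
    (i j : Fin 2) {t : ℝ} (ht : 0 ≤ t) (hd0 : (X t).det ≠ 0) :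
    HasDerivWithinAt (fun s => (X s)⁻¹ i j) (Ainv' X X' t i j) (Set.Ici 0) t := by
  have hdet := hasDeriv_det hX ht
  have hinv := hdet.inv hd0
  fin_cases i <;> fin_cases j
  · show HasDerivWithinAt (fun s => (X s)⁻¹ 0 0) (Ainv' X X' t 0 0) (Set.Ici 0) t
    have e : (fun s => (X s)⁻¹ 0 0) = fun s => ((X s).det)⁻¹ * X s 1 1 :=
      funext fun s => by rw [inv_entry_eq]; simp
    rw [e]
    refine (hinv.mul (hX 1 1 t ht)).congr_deriv ?_
    simp [Ainv', inv_entry_eq t, Matrix.mul_apply, Matrix.vecMul, dotProduct,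
      Fin.sum_univ_two, Matrix.det_fin_two, Matrix.neg_apply] at *
    field_simp
    ring
  · show HasDerivWithinAt (fun s => (X s)⁻¹ 0 1) (Ainv' X X' t 0 1) (Set.Ici 0) t
    have e : (fun s => (X s)⁻¹ 0 1) = fun s => ((X s).det)⁻¹ * (-(X s 0 1)) :=
      funext fun s => by rw [inv_entry_eq]; simp
    rw [e]
    refine (hinv.mul ((hX 0 1 t ht).neg)).congr_deriv ?_
    simp [Ainv', inv_entry_eq t, Matrix.mul_apply, Matrix.vecMul, dotProduct,
      Fin.sum_univ_two, Matrix.det_fin_two, Matrix.neg_apply] at *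
    field_simp
    ring
  · show HasDerivWithinAt (fun s => (X s)⁻¹ 1 0) (Ainv' X X' t 1 0) (Set.Ici 0) t
    have e : (fun s => (X s)⁻¹ 1 0) = fun s => ((X s).det)⁻¹ * (-(X s 1 0)) :=
      funext fun s => by rw [inv_entry_eq]; simp
    rw [e]
    refine (hinv.mul ((hX 1 0 t ht).neg)).congr_deriv ?_
    simp [Ainv', inv_entry_eq t, Matrix.mul_apply, Matrix.vecMul, dotProduct,
      Fin.sum_univ_two, Matrix.det_fin_two, Matrix.neg_apply] at *
    field_simp
    ring
  · show HasDerivWithinAt (fun s => (X s)⁻¹ 1 1) (Ainv' X X' t 1 1) (Set.Ici 0) t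
    have e : (fun s => (X s)⁻¹ 1 1) = fun s => ((X s).det)⁻¹ * X s 0 0 :=
      funext fun s => by rw [inv_entry_eq]; simp
    rw [e]
    refine (hinv.mul (hX 0 0 t ht)).congr_deriv ?_
    simp [Ainv', inv_entry_eq t, Matrix.mul_apply, Matrix.vecMul, dotProduct,
      Fin.sum_univ_two, Matrix.det_fin_two, Matrix.neg_apply] at *
    field_simp
    ring

lemma hasDeriv_Z
    (hX : ∀ i j, ∀ t, 0 ≤ t → HasDerivWithinAt (fun s => X s i j) (X' t i j) (Set.Ici 0) t)
    (hY : ∀ i j, ∀ t, 0 ≤ t → HasDerivWithinAt (fun s => Y s i j) (Y' t i j) (Set.Ici 0) t)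
    (i j : Fin 2) {t : ℝ} (ht : 0 ≤ t) (hd0 : (X t).det ≠ 0) :
    HasDerivWithinAt (fun s => ((X s)⁻¹ * Y s * ((X s)⁻¹)ᵀ) i j) (Wm X X' Y Y' t i j)
      (Set.Ici 0) t := by
  have h := fun i j => hasDeriv_inv hX i j ht hd0
  have e : (fun s => ((X s)⁻¹ * Y s * ((X s)⁻¹)ᵀ) i j)
      = (fun s => ((X s)⁻¹ i 0 * Y s 0 0 + (X s)⁻¹ i 1 * Y s 1 0) * (X s)⁻¹ j 0
          + ((X s)⁻¹ i 0 * Y s 0 1 + (X s)⁻¹ i 1 * Y s 1 1) * (X s)⁻¹ j 1) :=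
    funext fun s => by simp [Matrix.mul_apply, Fin.sum_univ_two]
  rw [e]
  have H := ((((h i 0).mul (hY 0 0 t ht)).add ((h i 1).mul (hY 1 0 t ht))).mul (h j 0)).add
    (((((h i 0).mul (hY 0 1 t ht)).add ((h i 1).mul (hY 1 1 t ht)))).mul (h j 1))
  refine (H).congr_deriv ?_
  simp [Wm, Ainv', Matrix.mul_apply, Matrix.vecMul, dotProduct, Fin.sum_univ_two,
    Matrix.transpose_apply, Matrix.add_apply, Matrix.neg_apply]
  ring

lemma hasDeriv_trY
    (hY : ∀ i j, ∀ t, 0 ≤ t → HasDerivWithinAt (fun s => Y s i j) (Y' t i j) (Set.Ici 0) t)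
    {t : ℝ} (ht : 0 ≤ t) :
    HasDerivWithinAt (fun s => (Y s).trace) ((Y' t).trace) (Set.Ici 0) t := by
  simp only [Matrix.trace_fin_two]
  exact (hY 0 0 t ht).add (hY 1 1 t ht)

lemma kappa_id {t : ℝ} (hsym : (Y t)ᵀ = Y t) (hu : IsUnit (X t).det) :
    (X t * Wm X X' Y Y' t * (X t)ᵀ).trace
      = (Y' t).trace - 2 * (X' t * (X t)⁻¹ * Y t).trace := by
  set A := (X t)⁻¹ with hA
  have hXA : X t * A = 1 := Matrix.mul_nonsing_inv _ hu
  have hAXt : Aᵀ * (X t)ᵀ = 1 := by rw [← Matrix.transpose_mul, hXA, Matrix.transpose_one]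
  have h1 : X t * (Ainv' X X' t * Y t * Aᵀ) * (X t)ᵀ = -(X' t * A * Y t) := by
    rw [Ainv']
    simp only [Matrix.neg_mul, Matrix.mul_neg, ← Matrix.mul_assoc]
    rw [hXA, Matrix.one_mul, Matrix.mul_assoc (X' t * A * Y t) Aᵀ ((X t)ᵀ), hAXt,
      Matrix.mul_one]
  have h2 : X t * (A * Y' t * Aᵀ) * (X t)ᵀ = Y' t := by
    simp only [← Matrix.mul_assoc]
    rw [hXA, Matrix.one_mul, Matrix.mul_assoc (Y' t) Aᵀ ((X t)ᵀ), hAXt, Matrix.mul_one]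
  have h3 : X t * (A * Y t * (Ainv' X X' t)ᵀ) * (X t)ᵀ = -(X' t * A * Y t)ᵀ := by
    rw [Ainv']
    simp only [Matrix.transpose_neg, Matrix.transpose_mul, Matrix.neg_mul, Matrix.mul_neg,
      ← Matrix.mul_assoc]
    rw [hXA, Matrix.one_mul]
    rw [Matrix.mul_assoc (Y t * Aᵀ * (X' t)ᵀ) Aᵀ ((X t)ᵀ), hAXt, Matrix.mul_one]
    simp [Matrix.transpose_mul, hsym, Matrix.mul_assoc]
  have expand : X t * Wm X X' Y Y' t * (X t)ᵀ
      = X t * (Ainv' X X' t * Y t * Aᵀ) * (X t)ᵀ + X t * (A * Y' t * Aᵀ) * (X t)ᵀ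
        + X t * (A * Y t * (Ainv' X X' t)ᵀ) * (X t)ᵀ := by
    rw [Wm]
    simp only [Matrix.mul_add, Matrix.add_mul]
    rfl
  rw [expand, h1, h2, h3, Matrix.trace_add, Matrix.trace_add, Matrix.trace_neg,
    Matrix.trace_neg, Matrix.trace_transpose]
  ring

end Derivs

/-! ### Complex PSD criterion -/

lemma quad_c (a00 a01 a11 c ar ai br bi : ℝ) (h1 : 0 ≤ a00 + a11)
    (h2 : c^2 ≤ a00 * a11 - a01 * a01) :
    0 ≤ ar * a01 * br * 2 - ar * (2*c) * bi + ar^2 * a00 + a00 * ai^2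
      + a01 * bi * ai * 2 + br * (2*c) * ai + br^2 * a11 + bi^2 * a11 := by
  have h00 : 0 ≤ a00 := by nlinarith [sq_nonneg a01, sq_nonneg c]
  have h11 : 0 ≤ a11 := by nlinarith [sq_nonneg a01, sq_nonneg c]
  rcases eq_or_lt_of_le h00 with h|h
  · have hc : c = 0 := by nlinarith [sq_nonneg a01, sq_nonneg c]
    have ha01 : a01 = 0 := by nlinarith [sq_nonneg a01, sq_nonneg c]
    rw [hc, ha01, ← h]
    nlinarith [sq_nonneg br, sq_nonneg bi]
  · nlinarith [sq_nonneg (a00 * ar + a01 * br - c * bi), sq_nonneg (a00 * ai + a01 * bi + c * br),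
      mul_nonneg (by nlinarith : (0:ℝ) ≤ a00 * a11 - a01 * a01 - c^2)
        (add_nonneg (sq_nonneg br) (sq_nonneg bi)), h.le]

lemma L1 (A : M2) (hA : A 0 1 = A 1 0) (e : ℝ)
    (h1 : 0 ≤ A.trace) (h2 : ((e-1)/2)^2 ≤ A.det) :
    ((Complex.I / 2) • cC (e • Omega1) + cC A - (Complex.I / 2) • cC Omega1).PosSemidef := by
  rw [Matrix.trace_fin_two] at h1
  rw [Matrix.det_fin_two, ← hA] at h2
  rw [Matrix.posSemidef_iff_dotProduct_mulVec]
  constructor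
  · rw [Matrix.IsHermitian]
    ext i j
    fin_cases i <;> fin_cases j <;>
      simp [cC, Omega1, conjTranspose_apply, Complex.ext_iff, hA] <;> ring
  · intro x
    rw [Complex.le_def]
    constructor
    · simp only [Complex.zero_re]
      simp [cC, Omega1, dotProduct, Matrix.mulVec, Fin.sum_univ_two, ← hA, Complex.add_re,
        Complex.mul_re, Complex.mul_im]
      ring_nf
      have := quad_c (A 0 0) (A 0 1) (A 1 1) ((e-1)/2) (x 0).re (x 0).im (x 1).re (x 1).im
        h1 (by nlinarith)
      nlinarith [this]
    · simp [cC, Omega1, dotProduct, Matrix.mulVec, Fin.sum_univ_two, ← hA, Complex.add_im,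
        Complex.mul_re, Complex.mul_im]
      ring_nf

lemma XOX (M : M2) : M * Omega1 * Mᵀ = M.det • Omega1 := by
  ext i j
  fin_cases i <;> fin_cases j <;>
    simp [Omega1, Matrix.mul_apply, Fin.sum_univ_two, Matrix.det_fin_two] <;> ring

set_option maxHeartbeats 8000000 in
/-- **Theorem 2.** A one-mode Gaussian process `(X_t, Y_t)`, continuously
differentiable on `[0,∞)` with `Y_t` symmetric and `X_t` invertible, satisfying
`δ_t ≥ ε_t²` and `κ_t ≥ 0` for all `t ≥ 0`, is CP-divisible: every intermediate
map `(X_τ(t), Y_τ(t))` satisfies the complete-positivity condition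
`(i/2) X_τ(t) Ω₁ X_τ(t)ᵀ + Y_τ(t) - (i/2)Ω₁ ≥ 0`. -/
theorem cp_divisible_of_delta_ge_eps_sq
    (X Y X' Y' : ℝ → Matrix (Fin 2) (Fin 2) ℝ)
    (hYs : ∀ t, 0 ≤ t → (Y t).IsSymm)
    (hXinv : ∀ t, 0 ≤ t → IsUnit (X t).det)
    (hX : ∀ i j, ∀ t, 0 ≤ t →
      HasDerivWithinAt (fun s => X s i j) (X' t i j) (Set.Ici 0) t)
    (hY : ∀ i j, ∀ t, 0 ≤ t →
      HasDerivWithinAt (fun s => Y s i j) (Y' t i j) (Set.Ici 0) t)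
    (hX'c : ∀ i j, ContinuousOn (fun t => X' t i j) (Set.Ici 0))
    (hY'c : ∀ i j, ContinuousOn (fun t => Y' t i j) (Set.Ici 0))
    -- `δ_t ≥ ε_t²` and `κ_t ≥ 0` for all `t ≥ 0` :
    (hyp : ∀ t, 0 ≤ t →
      ((1/2) * derivWithin (fun s => (X s).det) (Set.Ici 0) t / (X t).det) ^ 2 ≤
        ((X t).det) ^ 2 *
          (Matrix.of fun i j =>
            derivWithin (fun s => ((X s)⁻¹ * Y s * ((X s)⁻¹)ᵀ) i j) (Set.Ici 0) t).det ∧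
      0 ≤ derivWithin (fun s => (Y s).trace) (Set.Ici 0) t
            - 2 * (X' t * (X t)⁻¹ * Y t).trace) :
    ∀ t, 0 ≤ t → ∀ τ, 0 < τ →
      ((Complex.I / 2) • cC ((X (t+τ) * (X t)⁻¹) * Omega1 * (X (t+τ) * (X t)⁻¹)ᵀ)
        + cC (Y (t+τ) - (X (t+τ) * (X t)⁻¹) * Y t * (X (t+τ) * (X t)⁻¹)ᵀ)
        - (Complex.I / 2) • cC Omega1).PosSemidef := by
  intro t ht τ htau
  have ht2 : (0:ℝ) ≤ t + τ := by linarith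
  -- basic notations
  set Z : ℝ → M2 := fun s => (X s)⁻¹ * Y s * ((X s)⁻¹)ᵀ with hZdef
  set W : ℝ → M2 := Wm X X' Y Y' with hWdef
  set D : ℝ → ℝ := fun s => X' s 0 0 * X s 1 1 + X s 0 0 * X' s 1 1
    - (X' s 0 1 * X s 1 0 + X s 0 1 * X' s 1 0) with hDdef
  clear_value Z W D
  have hd : ∀ s, 0 ≤ s → (X s).det ≠ 0 := fun s hs =>
    isUnit_iff_ne_zero.mp (hXinv s hs)
  -- symmetry of Z on [0,∞)
  have hZsym : ∀ s, 0 ≤ s → (Z s)ᵀ = Z s := by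
    intro s hs
    simp only [hZdef]
    rw [Matrix.transpose_mul, Matrix.transpose_mul, Matrix.transpose_transpose,
      (hYs s hs).eq, Matrix.mul_assoc]
  -- facts from the hypothesis at each time s
  have hWfacts : ∀ s, 0 ≤ s →
      (W s 0 1 = W s 1 0) ∧
      (((1/2) * D s / (X s).det)^2 ≤ ((X s).det)^2 * (W s).det) ∧
      psd2 (W s) := by
    intro s hs
    have hds := hd s hs
    have hud := uniqueDiffOn_Ici (0:ℝ) s hs
    -- symmetry of W s
    have hW01 : W s 0 1 = W s 1 0 := by
      have h01 := hasDeriv_Z hX hY 0 1 hs hds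
      have h10 := hasDeriv_Z hX hY 1 0 hs hds
      have h10' : HasDerivWithinAt (fun u => ((X u)⁻¹ * Y u * ((X u)⁻¹)ᵀ) 0 1)
          (Wm X X' Y Y' s 1 0) (Set.Ici 0) s := by
        apply h10.congr
        · intro u hu
          have := hZsym u hu
          simp only [hZdef] at this
          calc ((X u)⁻¹ * Y u * ((X u)⁻¹)ᵀ) 0 1
              = ((X u)⁻¹ * Y u * ((X u)⁻¹)ᵀ)ᵀ 1 0 := rfl
            _ = ((X u)⁻¹ * Y u * ((X u)⁻¹)ᵀ) 1 0 := by rw [this]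
        · have := hZsym s hs
          simp only [hZdef] at this
          calc ((X s)⁻¹ * Y s * ((X s)⁻¹)ᵀ) 0 1
              = ((X s)⁻¹ * Y s * ((X s)⁻¹)ᵀ)ᵀ 1 0 := rfl
            _ = ((X s)⁻¹ * Y s * ((X s)⁻¹)ᵀ) 1 0 := by rw [this]
      rw [hWdef]
      calc Wm X X' Y Y' s 0 1 = derivWithin (fun u => ((X u)⁻¹ * Y u * ((X u)⁻¹)ᵀ) 0 1)
            (Set.Ici 0) s := (h01.derivWithin hud).symm
        _ = Wm X X' Y Y' s 1 0 := h10'.derivWithin hud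
    -- rewrite the hypothesis
    obtain ⟨hyp1, hyp2⟩ := hyp s hs
    have hMW : (Matrix.of fun i j =>
        derivWithin (fun u => ((X u)⁻¹ * Y u * ((X u)⁻¹)ᵀ) i j) (Set.Ici 0) s) = W s := by
      rw [hWdef]
      ext i j
      simp only [Matrix.of_apply]
      exact (hasDeriv_Z hX hY i j hs hds).derivWithin hud
    have hDet : derivWithin (fun u => (X u).det) (Set.Ici 0) s = D s := by
      simp only [hDdef]
      exact (hasDeriv_det hX hs).derivWithin hud
    rw [hMW, hDet] at hyp1
    have hTr : derivWithin (fun u => (Y u).trace) (Set.Ici 0) s = (Y' s).trace :=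
      (hasDeriv_trY hY hs).derivWithin hud
    rw [hTr] at hyp2
    -- the trace condition
    have htrW : 0 ≤ (X s * W s * (X s)ᵀ).trace := by
      rw [hWdef, kappa_id (hYs s hs).eq (hXinv s hs)]
      linarith
    -- det W s ≥ 0
    have hdetW : 0 ≤ (W s).det := by
      have hd2 : 0 < ((X s).det)^2 := by
        rcases lt_or_gt_of_ne hds with h|h <;> nlinarith
      by_contra hcon
      push_neg at hcon
      nlinarith [sq_nonneg ((1/2) * D s / (X s).det), mul_pos hd2 (neg_pos.2 hcon)]
    exact ⟨hW01, hyp1, psd2_of_conj (W s) (X s) hW01 hdetW htrW (hXinv s hs)⟩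
  -- quadratic form derivative
  have hgderiv : ∀ (u : Fin 2 → ℝ) (s : ℝ), 0 ≤ s →
      HasDerivWithinAt (fun r => u ⬝ᵥ (Z r *ᵥ u)) (u ⬝ᵥ (W s *ᵥ u)) (Set.Ici 0) s := by
    intro u s hs
    have hds := hd s hs
    have e : (fun r => u ⬝ᵥ (Z r *ᵥ u)) = fun r =>
        ((X r)⁻¹ * Y r * ((X r)⁻¹)ᵀ) 0 0 * (u 0 * u 0)
        + ((X r)⁻¹ * Y r * ((X r)⁻¹)ᵀ) 0 1 * (u 0 * u 1)
        + ((X r)⁻¹ * Y r * ((X r)⁻¹)ᵀ) 1 0 * (u 1 * u 0)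
        + ((X r)⁻¹ * Y r * ((X r)⁻¹)ᵀ) 1 1 * (u 1 * u 1) := by
      funext r
      simp only [hZdef]
      rw [dot_expand]
      ring
    rw [e]
    have H := ((((hasDeriv_Z hX hY 0 0 hs hds).mul_const (u 0 * u 0)).add
      ((hasDeriv_Z hX hY 0 1 hs hds).mul_const (u 0 * u 1))).add
      ((hasDeriv_Z hX hY 1 0 hs hds).mul_const (u 1 * u 0))).add
      ((hasDeriv_Z hX hY 1 1 hs hds).mul_const (u 1 * u 1))
    refine (H).congr_deriv ?_
    rw [dot_expand, hWdef]
    ring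
  -- monotonicity of the quadratic form along the flow
  have hgmono : ∀ (u : Fin 2 → ℝ) (a b : ℝ), t ≤ a → a ≤ b → b ≤ t + τ →
      u ⬝ᵥ (Z a *ᵥ u) ≤ u ⬝ᵥ (Z b *ᵥ u) := by
    intro u a b hta hab hbt
    have ha0 : 0 ≤ a := le_trans ht hta
    apply mono_Icc (f' := fun s => u ⬝ᵥ (W s *ᵥ u)) hab
    · intro x hx
      exact (hgderiv u x (le_trans ha0 hx.1)).mono (fun y hy => le_trans ha0 hy.1)
    · intro x hx
      exact (hWfacts x (le_trans ha0 hx.1.le)).2.2 u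
  set B := Z (t+τ) - Z t with hBdef
  clear_value B
  have hZ01 : ∀ s, 0 ≤ s → Z s 0 1 = Z s 1 0 := by
    intro s hs
    have h := hZsym s hs
    calc Z s 0 1 = (Z s)ᵀ 1 0 := rfl
      _ = Z s 1 0 := by rw [h]
  have hBsym : B 0 1 = B 1 0 := by
    rw [hBdef]
    simp only [Matrix.sub_apply]
    rw [hZ01 (t+τ) ht2, hZ01 t ht]
  have heB : ∀ u : Fin 2 → ℝ, u ⬝ᵥ (B *ᵥ u) = u ⬝ᵥ (Z (t+τ) *ᵥ u) - u ⬝ᵥ (Z t *ᵥ u) := by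
    intro u
    simp only [dot_expand, hBdef, Matrix.sub_apply]
    ring
  have hBpsd : psd2 B := by
    intro u
    rw [heB u]
    have := hgmono u t (t+τ) le_rfl (by linarith) le_rfl
    linarith
  have hBdnn : 0 ≤ B.det := psd2_det_nonneg B hBsym hBpsd
  -- the key scalar inequality
  have hkey : ((((X t).det)⁻¹ - ((X (t+τ)).det)⁻¹)/2)^2 ≤ B.det := by
    rcases eq_or_lt_of_le hBdnn with hB0|hBpos
    · -- degenerate case : B singular
      obtain ⟨u, hune, hqu⟩ : ∃ u : Fin 2 → ℝ, ¬(u 0 = 0 ∧ u 1 = 0) ∧ u ⬝ᵥ (B *ᵥ u) = 0 := by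
        have hdet0 : B 0 0 * B 1 1 - B 0 1 * B 1 0 = 0 := by
          rw [← Matrix.det_fin_two, ← hB0]
        by_cases h00 : B 0 0 = 0
        · refine ⟨![1, 0], by simp, ?_⟩
          rw [dot_expand]
          simp [h00]
        · refine ⟨![B 0 1, -(B 0 0)], by simp [h00], ?_⟩
          rw [dot_expand]
          simp only [Matrix.cons_val_zero, Matrix.cons_val_one, Matrix.head_cons]
          linear_combination (B 0 0) * hdet0
      have hgB : u ⬝ᵥ (Z (t+τ) *ᵥ u) = u ⬝ᵥ (Z t *ᵥ u) := by
        have := heB u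
        rw [hqu] at this
        linarith
      have hconst : ∀ s ∈ Set.Icc t (t+τ), u ⬝ᵥ (Z s *ᵥ u) = u ⬝ᵥ (Z t *ᵥ u) := by
        intro s hs
        have h1 := hgmono u t s le_rfl hs.1 hs.2
        have h2 := hgmono u s (t+τ) hs.1 hs.2 le_rfl
        linarith
      have hD0 : ∀ s ∈ Set.Ioo t (t+τ), D s = 0 := by
        intro s hsIoo
        have hs0 : 0 ≤ s := le_trans ht hsIoo.1.le
        have hds := hd s hs0
        have hnhds : Set.Icc t (t+τ) ∈ nhds s := Icc_mem_nhds hsIoo.1 hsIoo.2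
        have hder0 : HasDerivAt (fun r => u ⬝ᵥ (Z r *ᵥ u)) 0 s := by
          have hcon : (fun r => u ⬝ᵥ (Z r *ᵥ u)) =ᶠ[nhds s] (fun _ => u ⬝ᵥ (Z t *ᵥ u)) :=
            Filter.eventuallyEq_of_mem hnhds (fun x hx => hconst x hx)
          exact (hasDerivAt_const s _).congr_of_eventuallyEq hcon
        have hder := (hgderiv u s hs0).hasDerivAt
          (Ici_mem_nhds (lt_of_le_of_lt ht hsIoo.1))
        have hq0 : u ⬝ᵥ (W s *ᵥ u) = 0 := hder.unique hder0
        obtain ⟨hWsym, hWdet, hWpsd⟩ := hWfacts s hs0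
        have hdetle := det_eq_zero_of_null (W s) hWsym hWpsd u hune hq0
        have hd2 : 0 < ((X s).det)^2 := by
          rcases lt_or_gt_of_ne hds with h|h <;> nlinarith
        have hval : ((1/2) * D s / (X s).det)^2 ≤ 0 := by nlinarith
        have hval2 : (1/2) * D s / (X s).det = 0 := by
          nlinarith [sq_nonneg ((1/2) * D s / (X s).det)]
        field_simp [hds] at hval2
        linarith [hval2]
      have hdconst : ((X t).det)⁻¹ = ((X (t+τ)).det)⁻¹ := by
        have hderInv : ∀ s ∈ Set.Icc t (t+τ), HasDerivWithinAt (fun r => ((X r).det)⁻¹)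
            (-(D s) / ((X s).det)^2) (Set.Icc t (t+τ)) s := by
          intro s hs
          have hs0 : 0 ≤ s := le_trans ht hs.1
          simp only [hDdef]
          exact ((hasDeriv_det hX hs0).inv (hd s hs0)).mono
            (fun y (hy : y ∈ Set.Icc t (t+τ)) => le_trans ht hy.1)
        have h1 := mono_Icc (by linarith : t ≤ t+τ) hderInv
          (fun x hx => by
            show (0:ℝ) ≤ -(D x) / ((X x).det)^2
            rw [hD0 x hx]; simp)
        have h2 := mono_Icc (f := fun r => -((X r).det)⁻¹)
          (f' := fun s => D s / ((X s).det)^2) (by linarith : t ≤ t+τ)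
          (fun s hs => by
            have h := (hderInv s hs).neg
            refine (h).congr_deriv ?_
            field_simp)
          (fun x hx => by
            show (0:ℝ) ≤ D x / ((X x).det)^2
            rw [hD0 x hx]; simp)
        have h2' : -((X t).det)⁻¹ ≤ -((X (t+τ)).det)⁻¹ := h2
        linarith
      rw [hdconst]
      simp only [sub_self]
      norm_num
      exact hBdnn
    · -- positive case : Minkowski-type argument
      set m := Real.sqrt B.det with hmdef
      clear_value m
      have hm2 : m^2 = B.det := by rw [hmdef]; exact Real.sq_sqrt hBdnn
      have hm0 : 0 < m := by rw [hmdef]; exact Real.sqrt_pos.2 hBpos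
      set C := B.adjugate with hCdef
      clear_value C
      have hCe : C = !![B 1 1, -(B 0 1); -(B 1 0), B 0 0] := by
        rw [hCdef, Matrix.adjugate_fin_two]
      have hCs : C 0 1 = C 1 0 := by rw [hCe]; simp [hBsym]
      have hCpsd : psd2 C := by
        have hJ : C = !![0,1;(-1:ℝ),0] * B * (!![0,1;(-1:ℝ),0])ᵀ := by
          have hT : (!![0,1;(-1:ℝ),0])ᵀ = !![0,(-1:ℝ);1,0] := by
            ext i j
            fin_cases i <;> fin_cases j <;> rfl
          rw [hCe, hT]
          ext i j
          fin_cases i <;> fin_cases j <;>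
            simp [Matrix.mul_apply, Matrix.vecMul, dotProduct, Fin.sum_univ_two,
              hBsym]
        rw [hJ]
        exact psd2_congr _ _ hBpsd
      have hCdet : C.det = B.det := by
        rw [hCdef, Matrix.det_adjugate]
        norm_num
      have main : ∀ σ : ℝ, σ = 1 ∨ σ = -1 →
          σ * (m * (((X t).det)⁻¹ - ((X (t+τ)).det)⁻¹)) ≤ 2 * B.det := by
        intro σ hσ
        have hf : ∀ s ∈ Set.Icc t (t+τ), HasDerivWithinAt
            (fun r => (C * Z r).trace + σ*m*((X r).det)⁻¹)
            ((C * W s).trace + σ*m*(-(D s) / ((X s).det)^2)) (Set.Icc t (t+τ)) s := by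
          intro s hs
          have hs0 : 0 ≤ s := le_trans ht hs.1
          have hds := hd s hs0
          have hIcc : Set.Icc t (t+τ) ⊆ Set.Ici 0 := fun y hy => le_trans ht hy.1
          have htr : HasDerivWithinAt (fun r => (C * Z r).trace) ((C * W s).trace)
              (Set.Ici 0) s := by
            have e : (fun r => (C * Z r).trace) = fun r =>
                C 0 0 * ((X r)⁻¹ * Y r * ((X r)⁻¹)ᵀ) 0 0
                + C 0 1 * ((X r)⁻¹ * Y r * ((X r)⁻¹)ᵀ) 1 0
                + C 1 0 * ((X r)⁻¹ * Y r * ((X r)⁻¹)ᵀ) 0 1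
                + C 1 1 * ((X r)⁻¹ * Y r * ((X r)⁻¹)ᵀ) 1 1 := by
              funext r
              simp only [hZdef, Matrix.trace_fin_two, Matrix.mul_apply, Fin.sum_univ_two]
              ring
            rw [e]
            have H := ((((hasDeriv_Z hX hY 0 0 hs0 hds).const_mul (C 0 0)).add
              ((hasDeriv_Z hX hY 1 0 hs0 hds).const_mul (C 0 1))).add
              ((hasDeriv_Z hX hY 0 1 hs0 hds).const_mul (C 1 0))).add
              ((hasDeriv_Z hX hY 1 1 hs0 hds).const_mul (C 1 1))
            refine (H).congr_deriv ?_
            rw [hWdef]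
            simp only [Matrix.trace_fin_two, Matrix.mul_apply, Fin.sum_univ_two]
            ring
          simp only [hDdef]
          exact (htr.add (((hasDeriv_det hX hs0).inv hds).const_mul (σ*m))).mono hIcc
        have hbound : ∀ x ∈ Set.Ioo t (t+τ),
            0 ≤ (C * W x).trace + σ*m*(-(D x) / ((X x).det)^2) := by
          intro x hx
          have hx0 : 0 ≤ x := le_trans ht hx.1.le
          have hdx := hd x hx0
          have hd2 : 0 < ((X x).det)^2 := by
            rcases lt_or_gt_of_ne hdx with h|h <;> nlinarith
          obtain ⟨hWsym, hWdet, hWpsd⟩ := hWfacts x hx0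
          have htrge := trace_mul_ge C (W x) hCs hWsym hCpsd hWpsd
          rw [hCdet] at htrge
          have hWdet' : (D x)^2 ≤ (W x).det * (2 * ((X x).det)^2)^2 := by
            have h := hWdet
            rw [div_pow, div_le_iff₀ hd2] at h
            nlinarith [h]
          have h1 : (m * (|D x| / (2 * ((X x).det)^2)))^2 ≤ B.det * (W x).det := by
            rw [mul_pow, div_pow, sq_abs, hm2]
            apply mul_le_mul_of_nonneg_left _ hBdnn
            rw [div_le_iff₀ (by positivity)]
            linarith [hWdet']
          have hstep : m * (|D x| / (2 * ((X x).det)^2)) ≤ Real.sqrt (B.det * (W x).det) := by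
            rw [← Real.sqrt_sq (by positivity : (0:ℝ) ≤ m * (|D x| / (2 * ((X x).det)^2)))]
            exact Real.sqrt_le_sqrt h1
          have htr2 : m * |D x| / ((X x).det)^2 ≤ (C * W x).trace := by
            have h2s : 2 * (m * (|D x| / (2 * ((X x).det)^2)))
                ≤ 2 * Real.sqrt (B.det * (W x).det) := by linarith
            have heq : 2 * (m * (|D x| / (2 * ((X x).det)^2)))
                = m * |D x| / ((X x).det)^2 := by
              field_simp
            linarith
          have habs : -(m * |D x| / ((X x).det)^2) ≤ σ*m*(-(D x) / ((X x).det)^2) := by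
            rcases hσ with h|h <;> rw [h]
            · have : m * (D x) / ((X x).det)^2 ≤ m * |D x| / ((X x).det)^2 := by
                gcongr
                exact le_abs_self _
              rw [one_mul]
              rw [show m*(-(D x) / ((X x).det)^2) = -(m * (D x) / ((X x).det)^2) by ring]
              linarith
            · have : m * (-(D x)) / ((X x).det)^2 ≤ m * |D x| / ((X x).det)^2 := by
                gcongr
                exact neg_le_abs _
              rw [show (-1)*m*(-(D x) / ((X x).det)^2) = -(m * (-(D x)) / ((X x).det)^2) by
                ring]
              linarith
          linarith
        have hmono := mono_Icc (by linarith : t ≤ t + τ) hf hbound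
        have htrCB : (C * Z (t+τ)).trace - (C * Z t).trace = 2 * B.det := by
          have e1 : (C * Z (t+τ)).trace - (C * Z t).trace = (C * B).trace := by
            rw [hBdef, Matrix.mul_sub, Matrix.trace_sub]
          rw [e1, hCdef, Matrix.adjugate_mul]
          simp [Matrix.trace_smul, Matrix.trace_one]
          ring
        have hmono' : (C * Z t).trace + σ*m*((X t).det)⁻¹
            ≤ (C * Z (t+τ)).trace + σ*m*((X (t+τ)).det)⁻¹ := hmono
        nlinarith [hmono', htrCB]
      have h1 := main 1 (Or.inl rfl)
      have h2 := main (-1) (Or.inr rfl)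
      set x := ((X t).det)⁻¹ - ((X (t+τ)).det)⁻¹ with hxdef
      clear_value x
      have hx1 : m * x ≤ 2 * B.det := by nlinarith [h1]
      have hx2 : -(m * x) ≤ 2 * B.det := by nlinarith [h2]
      have h4 : x^2 ≤ 4 * B.det := by
        nlinarith [mul_nonneg (by linarith : (0:ℝ) ≤ 2*B.det - m*x)
          (by linarith : (0:ℝ) ≤ 2*B.det + m*x), hm2, hBpos]
      nlinarith [h4]
  -- assemble the final matrix statement
  have hu1 := hXinv t ht
  have hu2 := hXinv (t+τ) ht2
  have hXA1 : X t * (X t)⁻¹ = 1 := Matrix.mul_nonsing_inv _ hu1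
  have hXA2 : X (t+τ) * (X (t+τ))⁻¹ = 1 := Matrix.mul_nonsing_inv _ hu2
  have hAXt2 : ((X (t+τ))⁻¹)ᵀ * (X (t+τ))ᵀ = 1 := by
    rw [← Matrix.transpose_mul, hXA2, Matrix.transpose_one]
  -- Yτ = X₂ B X₂ᵀ
  have hYtau : Y (t+τ) - (X (t+τ) * (X t)⁻¹) * Y t * (X (t+τ) * (X t)⁻¹)ᵀ
      = X (t+τ) * B * (X (t+τ))ᵀ := by
    simp only [hBdef, hZdef, Matrix.mul_sub, Matrix.sub_mul]
    congr 1
    · simp only [← Matrix.mul_assoc]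
      rw [hXA2, Matrix.one_mul, Matrix.mul_assoc (Y (t+τ)) (((X (t+τ))⁻¹)ᵀ) ((X (t+τ))ᵀ),
        hAXt2, Matrix.mul_one]
    · simp only [Matrix.transpose_mul, ← Matrix.mul_assoc]
  have hBs' : (X (t+τ) * B * (X (t+τ))ᵀ) 0 1 = (X (t+τ) * B * (X (t+τ))ᵀ) 1 0 := by
    simp only [Matrix.mul_apply, Fin.sum_univ_two, Matrix.transpose_apply]
    rw [hBsym]
    ring
  have htrYtau : 0 ≤ (X (t+τ) * B * (X (t+τ))ᵀ).trace :=
    psd2_trace_nonneg _ (psd2_congr _ _ hBpsd)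
  have hdetYtau : (X (t+τ) * B * (X (t+τ))ᵀ).det = ((X (t+τ)).det)^2 * B.det := by
    rw [Matrix.det_mul, Matrix.det_mul, Matrix.det_transpose]
    ring
  have hdetXtau : (X (t+τ) * (X t)⁻¹).det = (X (t+τ)).det * ((X t).det)⁻¹ := by
    rw [Matrix.det_mul, Matrix.det_nonsing_inv, Ring.inverse_eq_inv]
  -- final determinant inequality
  have hfinal : (((X (t+τ) * (X t)⁻¹).det - 1)/2)^2 ≤ (X (t+τ) * B * (X (t+τ))ᵀ).det := by
    rw [hdetYtau, hdetXtau]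
    have hdt1 := hd t ht
    have hdt2 := hd (t+τ) ht2
    have e : (((X (t+τ)).det * ((X t).det)⁻¹ - 1)/2)^2
        = ((X (t+τ)).det)^2 * ((((X t).det)⁻¹ - ((X (t+τ)).det)⁻¹)/2)^2 := by
      field_simp
    rw [e]
    apply mul_le_mul_of_nonneg_left hkey (sq_nonneg _)
  -- rewrite the goal and apply the PSD criterion
  rw [XOX (X (t+τ) * (X t)⁻¹), hYtau]
  exact L1 _ hBs' _ htrYtau hfinal
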